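/- arXiv:1911.00513 — 7 statements merged into one kernel-verified Lean document; each statement's English description precedes it below -/
import Mathlib

section
/- Let n ≥ 1 and consider the 2^n × |B_n| real matrix A with rows indexed by subsets S ⊆ [n] and columns indexed by partitions σ ∈ B_n, defined by A(S,σ) = 1 if the restriction σ_S of σ to S has at most one odd-sized block, and A(S,σ) = 0 otherwise. Then A has rank 2^n − n. -/
open Finset
open scoped symmDiff
open Matrix

variable {n : ℕ}

/-- sign sum over the cube vanishes for nonempty W -/
lemma sum_sign_eq_zero (W : Finset (Fin n)) (hW : W.Nonempty) :
    ∑ U : Finset (Fin n), (-1:ℝ)^((W ∩ U).card) = 0 := by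
  obtain ⟨w, hw⟩ := hW
  apply Finset.sum_ninvolution (g := fun U => if w ∈ U then U.erase w else insert w U)
  · intro U
    by_cases h : w ∈ U
    · simp only [h, if_true]
      have h1 : W ∩ U.erase w = (W ∩ U).erase w := Finset.inter_erase ..
      have h2 : w ∈ W ∩ U := Finset.mem_inter.mpr ⟨hw, h⟩
      rw [h1, Finset.card_erase_of_mem h2]
      obtain ⟨m, hm⟩ : ∃ m, (W ∩ U).card = m + 1 :=
        ⟨(W ∩ U).card - 1, by have := Finset.card_pos.mpr ⟨w, h2⟩; omega⟩
      rw [hm]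
      simp [pow_succ]
    · simp only [h, if_false]
      have h1 : W ∩ insert w U = insert w (W ∩ U) := Finset.inter_insert_of_mem hw
      have h2 : w ∉ W ∩ U := fun hc => h (Finset.mem_inter.mp hc).2
      rw [h1, Finset.card_insert_of_notMem h2]
      simp [pow_succ]
  · intro U _
    by_cases h : w ∈ U
    · simp only [h, if_true]
      intro hc
      exact (Finset.erase_eq_self.mp hc) h
    · simp only [h, if_false]
      intro hc
      exact h (Finset.insert_eq_self.mp hc)
  · intro U; exact Finset.mem_univ _
  · intro U
    by_cases h : w ∈ U
    · simp [h, Finset.insert_erase h, Finset.notMem_erase]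
    · simp [h, Finset.erase_insert h]

lemma sign_mul_sign (X Y : Finset (Fin n)) :
    (-1:ℝ)^X.card * (-1)^Y.card = (-1)^((X ∆ Y).card) := by
  have hc : (X ∆ Y).card + 2 * (X ∩ Y).card = X.card + Y.card := by
    have h1 : (X \ Y).card + (X ∩ Y).card = X.card := Finset.card_sdiff_add_card_inter X Y
    have h2 : (Y \ X).card + (Y ∩ X).card = Y.card := Finset.card_sdiff_add_card_inter Y X
    have h3 : (X ∆ Y).card = (X \ Y).card + (Y \ X).card := by
      rw [symmDiff_def, Finset.sup_eq_union]
      exact Finset.card_union_of_disjoint (disjoint_sdiff_sdiff)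
    rw [Finset.inter_comm Y X] at h2
    omega
  calc (-1:ℝ)^X.card * (-1)^Y.card = (-1)^(X.card + Y.card) := (pow_add _ _ _).symm
    _ = (-1)^((X ∆ Y).card + 2 * (X ∩ Y).card) := by rw [hc]
    _ = (-1)^((X ∆ Y).card) * ((-1)^2)^((X ∩ Y).card) := by rw [pow_add, pow_mul]
    _ = (-1)^((X ∆ Y).card) := by norm_num

lemma fourier_inj (c : Finset (Fin n) → ℝ)
    (h : ∀ W : Finset (Fin n), ∑ S : Finset (Fin n), (-1:ℝ)^((W ∩ S).card) * c S = 0) :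
    c = 0 := by
  funext T
  have key : ∑ S : Finset (Fin n), (∑ U : Finset (Fin n), (-1:ℝ)^(((T ∆ S) ∩ U).card)) * c S
      = 0 := by
    have e1 : ∀ S U : Finset (Fin n),
        (-1:ℝ)^(((T ∆ S) ∩ U).card) = (-1)^((T ∩ U).card) * (-1)^((S ∩ U).card) := by
      intro S U
      rw [sign_mul_sign]
      congr 1
      rw [Finset.inter_comm _ U, ← Finset.inf_eq_inter, inf_symmDiff_distrib_left]
      simp [Finset.inf_eq_inter, Finset.inter_comm U]
    calc ∑ S : Finset (Fin n), (∑ U : Finset (Fin n), (-1:ℝ)^(((T ∆ S) ∩ U).card)) * c S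
        = ∑ S : Finset (Fin n), ∑ U : Finset (Fin n),
            (-1:ℝ)^((T ∩ U).card) * ((-1)^((S ∩ U).card) * c S) := by
          refine Finset.sum_congr rfl fun S _ => ?_
          rw [Finset.sum_mul]
          refine Finset.sum_congr rfl fun U _ => ?_
          rw [e1]; ring
      _ = ∑ U : Finset (Fin n), ∑ S : Finset (Fin n),
            (-1:ℝ)^((T ∩ U).card) * ((-1)^((S ∩ U).card) * c S) := Finset.sum_comm
      _ = ∑ U : Finset (Fin n), (-1:ℝ)^((T ∩ U).card) *
            (∑ S : Finset (Fin n), (-1)^((U ∩ S).card) * c S) := by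
          refine Finset.sum_congr rfl fun U _ => ?_
          rw [Finset.mul_sum]
          refine Finset.sum_congr rfl fun S _ => ?_
          rw [Finset.inter_comm U S]
      _ = 0 := by simp [h]
  have e2 : ∀ S : Finset (Fin n),
      (∑ U : Finset (Fin n), (-1:ℝ)^(((T ∆ S) ∩ U).card)) = if T = S then (2^n : ℝ) else 0 := by
    intro S
    by_cases hTS : T = S
    · subst hTS
      simp [Fintype.card_finset]
    · rw [if_neg hTS]
      apply sum_sign_eq_zero
      rw [Finset.nonempty_iff_ne_empty]
      intro hc
      exact hTS (by simpa using symmDiff_eq_bot.mp (by simpa using hc))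
  rw [Finset.sum_congr rfl fun S _ => by rw [e2 S]] at key
  simp only [ite_mul, zero_mul, Finset.sum_ite_eq, Finset.mem_univ, if_true] at key
  have : (2:ℝ)^n ≠ 0 := by positivity
  have := mul_eq_zero.mp key
  simp only [Pi.zero_apply]
  tauto

/-- each point lies in exactly one part -/
lemma card_filter_mem_parts (σ : Finpartition (univ : Finset (Fin n))) (x : Fin n) :
    (σ.parts.filter fun B => x ∈ B).card = 1 := by
  obtain ⟨t, ⟨ht, hxt⟩, hu⟩ := σ.existsUnique_mem (Finset.mem_univ x)
  rw [Finset.card_eq_one]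
  refine ⟨t, ?_⟩
  ext B
  simp only [Finset.mem_filter, Finset.mem_singleton]
  constructor
  · rintro ⟨hB, hxB⟩; exact hu B ⟨hB, hxB⟩
  · rintro rfl; exact ⟨ht, hxt⟩

lemma sum_inter_card (σ : Finpartition (univ : Finset (Fin n))) (S : Finset (Fin n)) :
    ∑ B ∈ σ.parts, (B ∩ S).card = S.card := by
  have e1 : ∀ B : Finset (Fin n), (B ∩ S).card = ∑ x ∈ S, if x ∈ B then 1 else 0 := by
    intro B
    rw [Finset.inter_comm, ← Finset.filter_mem_eq_inter, Finset.card_filter]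
  calc ∑ B ∈ σ.parts, (B ∩ S).card = ∑ B ∈ σ.parts, ∑ x ∈ S, if x ∈ B then 1 else 0 := by
        exact Finset.sum_congr rfl fun B _ => e1 B
    _ = ∑ x ∈ S, ∑ B ∈ σ.parts, if x ∈ B then 1 else 0 := Finset.sum_comm
    _ = ∑ x ∈ S, 1 := by
        refine Finset.sum_congr rfl fun x _ => ?_
        rw [← Finset.card_filter]
        exact card_filter_mem_parts σ x
    _ = S.card := by simp

lemma ind_eq (k : ℕ) (hk : k ≤ 3) :
    (if k ≤ 1 then (1:ℝ) else 0) = 1 - ((k:ℝ) - (if Odd k then 1 else 0))/2 := by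
  interval_cases k <;> norm_num [Nat.odd_iff]

/-- the odd-intersection weighted sum -/
def gf (c : Finset (Fin n) → ℝ) (B : Finset (Fin n)) : ℝ :=
  ∑ S : Finset (Fin n), (if Odd ((B ∩ S).card) then (1:ℝ) else 0) * c S

lemma part_rel (c : Finset (Fin n) → ℝ) (σ : Finpartition (univ : Finset (Fin n)))
    (hσ : σ.parts.card ≤ 3)
    (h : ∑ S : Finset (Fin n),
      (if (σ.parts.filter fun B => Odd ((B ∩ S).card)).card ≤ 1 then (1:ℝ) else 0) * c S = 0) :
    (∑ S : Finset (Fin n), c S) - (∑ B ∈ σ.parts, gf c B)/2 + (gf c univ)/2 = 0 := by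
  have hpt : ∀ S : Finset (Fin n),
      (if (σ.parts.filter fun B => Odd ((B ∩ S).card)).card ≤ 1 then (1:ℝ) else 0)
      = 1 - ((((σ.parts.filter fun B => Odd ((B ∩ S).card)).card : ℝ))
          - (if Odd S.card then 1 else 0))/2 := by
    intro S
    have hk3 : (σ.parts.filter fun B => Odd ((B ∩ S).card)).card ≤ 3 :=
      le_trans (Finset.card_filter_le _ _) hσ
    have hpar : Odd ((σ.parts.filter fun B => Odd ((B ∩ S).card)).card) ↔ Odd S.card := by
      rw [← Finset.odd_sum_iff_odd_card_odd (fun B => (B ∩ S).card), sum_inter_card]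
    rw [ind_eq _ hk3, if_congr hpar rfl rfl]
  rw [Finset.sum_congr rfl (fun S _ => by rw [hpt S])] at h
  have e1 : ∑ S : Finset (Fin n), (if Odd S.card then (1:ℝ) else 0) * c S = gf c univ := by
    unfold gf
    refine Finset.sum_congr rfl fun S _ => ?_
    rw [Finset.univ_inter]
  have e3 : ∀ S : Finset (Fin n), (((σ.parts.filter fun B => Odd ((B ∩ S).card)).card : ℝ))
      = ∑ B ∈ σ.parts, (if Odd ((B ∩ S).card) then (1:ℝ) else 0) := by
    intro S
    rw [Finset.card_filter]
    push_cast
    rfl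
  have e2 : ∑ S : Finset (Fin n),
      ((((σ.parts.filter fun B => Odd ((B ∩ S).card)).card : ℝ))) * c S
      = ∑ B ∈ σ.parts, gf c B := by
    calc ∑ S : Finset (Fin n),
        ((((σ.parts.filter fun B => Odd ((B ∩ S).card)).card : ℝ))) * c S
        = ∑ S : Finset (Fin n), ∑ B ∈ σ.parts,
            (if Odd ((B ∩ S).card) then (1:ℝ) else 0) * c S := by
          refine Finset.sum_congr rfl fun S _ => ?_
          rw [e3 S, Finset.sum_mul]
      _ = ∑ B ∈ σ.parts, ∑ S : Finset (Fin n),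
            (if Odd ((B ∩ S).card) then (1:ℝ) else 0) * c S := Finset.sum_comm
      _ = ∑ B ∈ σ.parts, gf c B := rfl
  have expand : ∀ S : Finset (Fin n),
      (1 - ((((σ.parts.filter fun B => Odd ((B ∩ S).card)).card : ℝ))
          - (if Odd S.card then 1 else 0))/2) * c S
      = c S - ((((σ.parts.filter fun B => Odd ((B ∩ S).card)).card : ℝ)) * c S)/2
          + ((if Odd S.card then (1:ℝ) else 0) * c S)/2 := by
    intro S; ring
  rw [Finset.sum_congr rfl (fun S _ => by rw [expand S])] at h
  rw [Finset.sum_add_distrib, Finset.sum_sub_distrib, ← Finset.sum_div, ← Finset.sum_div,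
    e1, e2] at h
  linarith

/-- two-block partition -/
def pairPart (B : Finset (Fin n)) (hB : B.Nonempty) (hB' : Bᶜ.Nonempty) :
    Finpartition (univ : Finset (Fin n)) where
  parts := {B, Bᶜ}
  supIndep := by
    have hne : B ≠ Bᶜ := by
      intro h
      obtain ⟨x, hx⟩ := hB
      have hx' : x ∈ Bᶜ := h ▸ hx
      exact (Finset.mem_compl.mp hx') hx
    exact (Finset.supIndep_pair hne).mpr disjoint_compl_right
  sup_parts := by
    simp only [Finset.sup_insert, Finset.sup_singleton, id]
    rw [sup_compl_eq_top, Finset.top_eq_univ]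
  bot_notMem := by
    simp only [Finset.bot_eq_empty, Finset.mem_insert, Finset.mem_singleton]
    push_neg
    exact ⟨hB.ne_empty.symm, hB'.ne_empty.symm⟩

@[simp] lemma pairPart_parts (B : Finset (Fin n)) (hB : B.Nonempty) (hB' : Bᶜ.Nonempty) :
    (pairPart B hB hB').parts = {B, Bᶜ} := rfl

lemma ne_of_disjoint {A B : Finset (Fin n)} (hA : A.Nonempty) (hd : Disjoint A B) : A ≠ B := by
  rintro rfl
  exact hA.ne_empty (by simpa using disjoint_self.mp hd)

/-- three-block partition -/
def triplePart (A B C : Finset (Fin n)) (hA : A.Nonempty) (hB : B.Nonempty) (hC : C.Nonempty)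
    (hAB : Disjoint A B) (hAC : Disjoint A C) (hBC : Disjoint B C)
    (hU : A ∪ B ∪ C = univ) : Finpartition (univ : Finset (Fin n)) where
  parts := {A, B, C}
  supIndep := by
    rw [Finset.supIndep_iff_pairwiseDisjoint]
    intro x hx y hy hxy
    simp only [Finset.coe_insert, Set.mem_insert_iff, Finset.coe_singleton,
      Set.mem_singleton_iff] at hx hy
    rcases hx with rfl | rfl | rfl <;> rcases hy with rfl | rfl | rfl <;>
      first
        | exact absurd rfl hxy
        | exact hAB
        | exact hAC
        | exact hBC
        | exact hAB.symm
        | exact hAC.symm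
        | exact hBC.symm
  sup_parts := by
    simp only [Finset.sup_insert, Finset.sup_singleton, id, Finset.sup_eq_union]
    rw [← Finset.union_assoc, hU]
  bot_notMem := by
    simp only [Finset.bot_eq_empty, Finset.mem_insert, Finset.mem_singleton]
    push_neg
    exact ⟨hA.ne_empty.symm, hB.ne_empty.symm, hC.ne_empty.symm⟩

@[simp] lemma triplePart_parts (A B C : Finset (Fin n)) (hA : A.Nonempty) (hB : B.Nonempty)
    (hC : C.Nonempty) (hAB : Disjoint A B) (hAC : Disjoint A C) (hBC : Disjoint B C)
    (hU : A ∪ B ∪ C = univ) :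
    (triplePart A B C hA hB hC hAB hAC hBC hU).parts = {A, B, C} := rfl

section Kernel

variable (c : Finset (Fin n) → ℝ)

/-- the kernel hypothesis -/
def KerHyp (c : Finset (Fin n) → ℝ) : Prop :=
  ∀ σ : Finpartition (univ : Finset (Fin n)),
    ∑ S : Finset (Fin n),
      (if (σ.parts.filter fun B => Odd ((B ∩ S).card)).card ≤ 1 then (1:ℝ) else 0) * c S = 0

lemma m_zero (hn : 1 ≤ n) (H : KerHyp c) : ∑ S : Finset (Fin n), c S = 0 := by
  have hne : (univ : Finset (Fin n)) ≠ ∅ := by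
    have : (⟨0, hn⟩ : Fin n) ∈ (univ : Finset (Fin n)) := Finset.mem_univ _
    exact Finset.ne_empty_of_mem this
  have h := part_rel c (Finpartition.indiscrete hne) (by simp [Finpartition.indiscrete]) (H _)
  have hparts : (Finpartition.indiscrete hne).parts = {(univ : Finset (Fin n))} := rfl
  rw [hparts, Finset.sum_singleton] at h
  linarith

lemma rel_pair (hn : 1 ≤ n) (H : KerHyp c) (B : Finset (Fin n)) (hB : B.Nonempty)
    (hB' : Bᶜ.Nonempty) : gf c B + gf c Bᶜ = gf c univ := by
  have h := part_rel c (pairPart B hB hB') ?_ (H _)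
  · rw [pairPart_parts] at h
    have hne : B ≠ Bᶜ := by
      intro hc
      obtain ⟨x, hx⟩ := hB
      exact (Finset.mem_compl.mp (hc ▸ hx)) hx
    rw [Finset.sum_pair hne, m_zero c hn H] at h
    linarith
  · rw [pairPart_parts]
    exact le_trans (Finset.card_insert_le _ _) (by simp)

lemma rel_triple (hn : 1 ≤ n) (H : KerHyp c) (A B C : Finset (Fin n))
    (hA : A.Nonempty) (hB : B.Nonempty) (hC : C.Nonempty)
    (hAB : Disjoint A B) (hAC : Disjoint A C) (hBC : Disjoint B C)
    (hU : A ∪ B ∪ C = univ) : gf c A + gf c B + gf c C = gf c univ := by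
  have h := part_rel c (triplePart A B C hA hB hC hAB hAC hBC hU) ?_ (H _)
  · rw [triplePart_parts] at h
    have hAB' : A ≠ B := ne_of_disjoint hA hAB
    have hAC' : A ≠ C := ne_of_disjoint hA hAC
    have hBC' : B ≠ C := ne_of_disjoint hB hBC
    rw [Finset.sum_insert (by simp [hAB', hAC']), Finset.sum_pair hBC',
      m_zero c hn H] at h
    linarith
  · rw [triplePart_parts]
    exact le_trans (Finset.card_insert_le _ _)
      (by simpa using Nat.add_le_add_right (Finset.card_insert_le B ({C} : Finset (Finset (Fin n)))) 1)

lemma g_add (hn : 1 ≤ n) (H : KerHyp c) (A B : Finset (Fin n)) (hA : A.Nonempty)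
    (hB : B.Nonempty) (hd : Disjoint A B) : gf c (A ∪ B) = gf c A + gf c B := by
  by_cases hU : A ∪ B = univ
  · have hcompl : Aᶜ = B := by
      rw [Finset.compl_eq_univ_sdiff, ← hU, Finset.union_sdiff_cancel_left hd]
    have h := rel_pair c hn H A hA (hcompl ▸ hB)
    rw [hcompl, ← hU] at h
    linarith
  · have hC : ((A ∪ B)ᶜ : Finset (Fin n)).Nonempty := by
      rw [Finset.nonempty_iff_ne_empty]
      intro hc
      exact hU (compl_eq_empty_iff _ |>.mp hc)
    have hAC : Disjoint A ((A ∪ B)ᶜ) :=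
      disjoint_compl_right.mono_left Finset.subset_union_left
    have hBC : Disjoint B ((A ∪ B)ᶜ) :=
      disjoint_compl_right.mono_left Finset.subset_union_right
    have h3 := rel_triple c hn H A B ((A ∪ B)ᶜ) hA hB hC hd hAC hBC
      (by rw [Finset.union_compl])
    have h2 := rel_pair c hn H (A ∪ B) (hA.mono Finset.subset_union_left) hC
    linarith

lemma gf_empty : gf c ∅ = 0 := by
  unfold gf
  simp

lemma g_formula (hn : 1 ≤ n) (H : KerHyp c) (U : Finset (Fin n)) :
    gf c U = ∑ i ∈ U, gf c {i} := by
  induction U using Finset.induction_on with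
  | empty => simpa using gf_empty c
  | @insert a U ha ih =>
    rw [Finset.sum_insert ha, ← ih]
    rcases U.eq_empty_or_nonempty with rfl | hU
    · simp [gf_empty c]
    · have : insert a U = {a} ∪ U := rfl
      rw [this, g_add c hn H {a} U (Finset.singleton_nonempty a) hU
        (Finset.disjoint_singleton_left.mpr ha)]

end Kernel

lemma neg_one_pow_eq (k : ℕ) : (-1:ℝ)^k = 1 - 2 * (if Odd k then 1 else 0) := by
  by_cases h : Odd k
  · rw [h.neg_one_pow]; simp [h]; norm_num
  · rw [(Nat.not_odd_iff_even.mp h).neg_one_pow]; simp [h]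

/-- the 0-1 matrix with rows indexed by subsets `S ⊆ [n]` and columns by
partitions `σ ∈ B_n`, with entry `1` iff the restriction `σ_S` has at most one odd-sized
block, has rank `2^n - n`. -/
theorem rank_odd_block_matrix (n : ℕ) (hn : 1 ≤ n) :
    Matrix.rank (fun (S : Finset (Fin n)) (σ : Finpartition (univ : Finset (Fin n))) =>
      if (σ.parts.filter fun B => Odd (B ∩ S).card).card ≤ 1 then (1:ℝ) else 0)
      = 2 ^ n - n := by
  classical
  set A : Matrix (Finset (Fin n)) (Finpartition (univ : Finset (Fin n))) ℝ :=
    fun S σ => if (σ.parts.filter fun B => Odd ((B ∩ S).card)).card ≤ 1 then (1:ℝ) else 0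
    with hA
  rw [← Matrix.rank_transpose, Matrix.rank]
  -- the special vectors
  set v : Fin n → (Finset (Fin n) → ℝ) :=
    fun i S => (if S = {i} then (1:ℝ) else 0) - (if S = ∅ then 1 else 0) with hv
  -- entries at ∅ and singletons are 1
  have hAe : ∀ σ : Finpartition (univ : Finset (Fin n)), A ∅ σ = 1 := by
    intro σ
    have : (σ.parts.filter fun B => Odd ((B ∩ (∅ : Finset (Fin n))).card)).card = 0 := by
      simp
    simp [hA, this]
  have hAs : ∀ (i : Fin n) (σ : Finpartition (univ : Finset (Fin n))), A {i} σ = 1 := by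
    intro i σ
    have hpred : ∀ B ∈ σ.parts, (Odd ((B ∩ ({i} : Finset (Fin n))).card) ↔ i ∈ B) := by
      intro B _
      by_cases h : i ∈ B
      · simp [Finset.inter_singleton_of_mem h, h]
      · simp [Finset.inter_singleton_of_notMem h, h]
    rw [hA]
    simp only
    rw [Finset.filter_congr hpred, card_filter_mem_parts σ i]
    norm_num
  -- evaluation of the matrix-vector pairing on v i
  have hpair : ∀ (f : Finset (Fin n) → ℝ) (i : Fin n),
      ∑ S : Finset (Fin n), f S * v i S = f {i} - f ∅ := by
    intro f i
    simp only [hv, mul_sub]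
    rw [Finset.sum_sub_distrib]
    simp [mul_ite, Finset.sum_ite_eq']
  -- span ⊆ ker
  have hker_ge : ∀ i : Fin n, v i ∈ LinearMap.ker (Matrix.mulVecLin Aᵀ) := by
    intro i
    rw [LinearMap.mem_ker]
    funext σ
    have : Matrix.mulVecLin Aᵀ (v i) σ = ∑ S : Finset (Fin n), A S σ * v i S := by
      simp [Matrix.mulVecLin_apply, Matrix.mulVec, dotProduct, Matrix.transpose]
    rw [this, hpair (fun S => A S σ) i, hAs i σ, hAe σ]
    simp
  -- ker ⊆ span
  have hker_le : ∀ c ∈ LinearMap.ker (Matrix.mulVecLin Aᵀ),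
      c ∈ Submodule.span ℝ (Set.range v) := by
    intro c hc
    have H : KerHyp c := by
      intro σ
      have := congrFun (LinearMap.mem_ker.mp hc) σ
      simpa [Matrix.mulVecLin_apply, Matrix.mulVec, dotProduct, Matrix.transpose, hA]
        using this
    have hm := m_zero c hn H
    set c' : Finset (Fin n) → ℝ := fun S => c S - ∑ i : Fin n, gf c {i} * v i S with hc'
    have hzero : c' = 0 := by
      apply fourier_inj
      intro W
      have hsplit : ∑ S : Finset (Fin n), (-1:ℝ)^((W ∩ S).card) * c' S
          = (∑ S : Finset (Fin n), (-1:ℝ)^((W ∩ S).card) * c S)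
            - ∑ i : Fin n, gf c {i} *
                (∑ S : Finset (Fin n), (-1:ℝ)^((W ∩ S).card) * v i S) := by
        rw [hc']
        simp only [mul_sub]
        rw [Finset.sum_sub_distrib]
        congr 1
        calc ∑ S : Finset (Fin n), (-1:ℝ)^((W ∩ S).card) * ∑ i : Fin n, gf c {i} * v i S
            = ∑ S : Finset (Fin n), ∑ i : Fin n,
                gf c {i} * ((-1:ℝ)^((W ∩ S).card) * v i S) := by
              refine Finset.sum_congr rfl fun S _ => ?_
              rw [Finset.mul_sum]
              exact Finset.sum_congr rfl fun i _ => by ring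
          _ = ∑ i : Fin n, ∑ S : Finset (Fin n),
                gf c {i} * ((-1:ℝ)^((W ∩ S).card) * v i S) := Finset.sum_comm
          _ = ∑ i : Fin n, gf c {i} *
                ∑ S : Finset (Fin n), (-1:ℝ)^((W ∩ S).card) * v i S := by
              refine Finset.sum_congr rfl fun i _ => ?_
              rw [Finset.mul_sum]
      have hfirst : ∑ S : Finset (Fin n), (-1:ℝ)^((W ∩ S).card) * c S
          = -2 * gf c W := by
        have : ∀ S : Finset (Fin n), (-1:ℝ)^((W ∩ S).card) * c S
            = c S - 2 * ((if Odd ((W ∩ S).card) then (1:ℝ) else 0) * c S) := by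
          intro S
          rw [neg_one_pow_eq]
          ring
        rw [Finset.sum_congr rfl fun S _ => this S]
        rw [Finset.sum_sub_distrib, ← Finset.mul_sum, hm]
        unfold gf
        ring
      have hsecond : ∀ i : Fin n,
          ∑ S : Finset (Fin n), (-1:ℝ)^((W ∩ S).card) * v i S
          = (if i ∈ W then (-2:ℝ) else 0) := by
        intro i
        rw [hpair (fun S => (-1:ℝ)^((W ∩ S).card)) i]
        by_cases h : i ∈ W
        · simp [Finset.inter_singleton_of_mem h, h]; norm_num
        · simp [Finset.inter_singleton_of_notMem h, h]
      rw [hsplit, hfirst]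
      rw [Finset.sum_congr rfl fun i _ => by rw [hsecond i]]
      rw [g_formula c hn H W]
      simp only [mul_ite, mul_neg, mul_zero]
      rw [Finset.sum_ite_mem, Finset.univ_inter]
      rw [Finset.sum_neg_distrib, ← Finset.sum_mul]
      ring
    have : c = fun S => ∑ i : Fin n, gf c {i} * v i S := by
      funext S
      have := congrFun hzero S
      simp only [hc', Pi.zero_apply] at this
      linarith
    rw [this]
    have : (fun S => ∑ i : Fin n, gf c {i} * v i S)
        = ∑ i : Fin n, gf c {i} • v i := by
      funext S
      rw [Finset.sum_apply]
      rfl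
    rw [this]
    exact Submodule.sum_mem _ fun i _ =>
      Submodule.smul_mem _ _ (Submodule.subset_span (Set.mem_range_self i))
  have hkereq : LinearMap.ker (Matrix.mulVecLin Aᵀ) = Submodule.span ℝ (Set.range v) := by
    apply le_antisymm
    · exact hker_le
    · rw [Submodule.span_le]
      rintro _ ⟨i, rfl⟩
      exact hker_ge i
  -- linear independence of v
  have hli : LinearIndependent ℝ v := by
    rw [Fintype.linearIndependent_iff]
    intro g hg j
    have := congrFun hg {j}
    rw [Finset.sum_apply] at this
    simp only [Pi.smul_apply, hv, smul_eq_mul, Pi.zero_apply] at this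
    have hsimp : ∀ i : Fin n,
        g i * ((if ({j} : Finset (Fin n)) = {i} then (1:ℝ) else 0)
          - (if ({j} : Finset (Fin n)) = ∅ then 1 else 0))
        = if i = j then g i else 0 := by
      intro i
      have h1 : (({j} : Finset (Fin n)) = {i}) ↔ (i = j) := by
        rw [Finset.singleton_inj]; exact eq_comm
      have h2 : (({j} : Finset (Fin n)) = ∅) ↔ False := by
        simp
      rw [if_congr h1 rfl rfl, if_congr h2 rfl rfl, if_neg id]
      by_cases h : i = j <;> simp [h]
    rw [Finset.sum_congr rfl fun i _ => hsimp i] at this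
    rwa [Finset.sum_ite_eq' Finset.univ j g, if_pos (Finset.mem_univ j)] at this
  -- dimension count
  have hrn := LinearMap.finrank_range_add_finrank_ker (Matrix.mulVecLin Aᵀ)
  have hdim : Module.finrank ℝ (Finset (Fin n) → ℝ) = 2 ^ n := by
    rw [Module.finrank_pi, Fintype.card_finset, Fintype.card_fin]
  have hkerdim : Module.finrank ℝ (LinearMap.ker (Matrix.mulVecLin Aᵀ)) = n := by
    rw [hkereq, finrank_span_eq_card hli, Fintype.card_fin]
  rw [hdim, hkerdim] at hrn
  have h2n : n < 2 ^ n := Nat.lt_two_pow_self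
  omega
end

section
/- Let n ≥ 1, let S ⊆ [n] have odd cardinality, and let ν : {0,1}^n → ℝ satisfy ν(ρ) = ν(1−ρ) for all ρ ∈ {0,1}^n. Then Σ_{T ⊆ S} (−2)^{|T|} ν(1^T) = 0. -/
open Finset

/-- if `|S|` is odd and `ν` is `{0,1}`-symmetric, then
`Σ_{T ⊆ S} (-2)^{|T|} ν(1^T) = 0`. -/
theorem odd_rows_zero (n : ℕ) (hn : 1 ≤ n) (S : Finset (Fin n)) (hS : Odd S.card)
    (ν : (Fin n → Bool) → ℝ)
    (hsym : ∀ ρ : Fin n → Bool, ν ρ = ν (fun i => !(ρ i))) :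
    ∑ T ∈ S.powerset, (-2:ℝ) ^ T.card *
      (∑ ρ ∈ univ.filter (fun ρ : Fin n → Bool => ∀ i ∈ T, ρ i = true), ν ρ) = 0 := by
  -- rewrite each inner sum as a sum over all ρ with an `if`
  have step1 : ∑ T ∈ S.powerset, (-2:ℝ) ^ T.card *
      (∑ ρ ∈ univ.filter (fun ρ : Fin n → Bool => ∀ i ∈ T, ρ i = true), ν ρ)
      = ∑ T ∈ S.powerset, ∑ ρ : Fin n → Bool,
          (if ∀ i ∈ T, ρ i = true then (-2:ℝ) ^ T.card * ν ρ else 0) := by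
    refine Finset.sum_congr rfl fun T _ => ?_
    rw [Finset.sum_filter, Finset.mul_sum]
    refine Finset.sum_congr rfl fun ρ _ => ?_
    split <;> simp
  rw [step1, Finset.sum_comm]
  -- compute the inner sum for each fixed ρ
  have key : ∀ ρ : Fin n → Bool, ∑ T ∈ S.powerset,
      (if ∀ i ∈ T, ρ i = true then (-2:ℝ) ^ T.card * ν ρ else 0)
      = (-1:ℝ) ^ (S.filter (fun i => ρ i = true)).card * ν ρ := by
    intro ρ
    set A := S.filter (fun i => ρ i = true) with hA
    rw [show (∑ T ∈ S.powerset, if ∀ i ∈ T, ρ i = true then (-2:ℝ) ^ T.card * ν ρ else 0)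
        = ∑ T ∈ S.powerset.filter (fun T => ∀ i ∈ T, ρ i = true), (-2:ℝ) ^ T.card * ν ρ
      from (Finset.sum_filter _ _).symm]
    have hfil : S.powerset.filter (fun T => ∀ i ∈ T, ρ i = true) = A.powerset := by
      ext T
      simp only [Finset.mem_filter, Finset.mem_powerset, hA, Finset.subset_iff,
        Finset.mem_filter]
      constructor
      · rintro ⟨h1, h2⟩ x hx; exact ⟨h1 hx, h2 x hx⟩
      · intro h; exact ⟨fun x hx => (h hx).1, fun x hx => (h hx).2⟩
    rw [hfil, ← Finset.sum_mul]
    congr 1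
    have hp := Finset.prod_add (fun _ : Fin n => (-2:ℝ)) (fun _ : Fin n => 1) A
    simp only [Finset.prod_const, Finset.prod_const_one, mul_one] at hp
    norm_num at hp
    rw [← hp]
  have step2 : ∑ ρ : Fin n → Bool, ∑ T ∈ S.powerset,
      (if ∀ i ∈ T, ρ i = true then (-2:ℝ) ^ T.card * ν ρ else 0)
      = ∑ ρ : Fin n → Bool, (-1:ℝ) ^ (S.filter (fun i => ρ i = true)).card * ν ρ :=
    Finset.sum_congr rfl fun ρ _ => key ρ
  rw [step2]
  -- pair ρ with its complement
  refine Finset.sum_involution (fun ρ _ => fun i => !(ρ i)) ?_ ?_ (fun ρ _ => Finset.mem_univ _) ?_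
  · intro ρ _
    have hcompl : (S.filter (fun i => (!(ρ i)) = true)).card
        = S.card - (S.filter (fun i => ρ i = true)).card := by
      have h := Finset.card_filter_add_card_filter_not
        (s := S) (p := fun i => ρ i = true)
      have : (S.filter (fun i => ¬ (ρ i = true))) = S.filter (fun i => (!(ρ i)) = true) := by
        apply Finset.filter_congr
        intro i _
        simp
      have h2 := congrArg Finset.card this
      omega
    have hle : (S.filter (fun i => ρ i = true)).card ≤ S.card :=
      Finset.card_filter_le _ _
    have hν : ν (fun i => !(ρ i)) = ν ρ := (hsym ρ).symm
    rw [hν, hcompl, ← add_mul]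
    have hsign : (-1:ℝ) ^ (S.filter (fun i => ρ i = true)).card
        + (-1:ℝ) ^ (S.card - (S.filter (fun i => ρ i = true)).card) = 0 := by
      set c := (S.filter (fun i => ρ i = true)).card
      rcases Nat.even_or_odd c with hc | hc
      · have h1 : Odd (S.card - c) := Nat.Odd.sub_even hle hS hc
        rw [Even.neg_one_pow hc, Odd.neg_one_pow h1]; ring
      · have h1 : Even (S.card - c) := Nat.Odd.sub_odd hS hc
        rw [Odd.neg_one_pow hc, Even.neg_one_pow h1]; ring
    rw [hsign, zero_mul]
  · intro ρ _ _ h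
    have : (!(ρ ⟨0, hn⟩)) = ρ ⟨0, hn⟩ := congrFun h ⟨0, hn⟩
    simp at this
  · intro ρ _
    funext i
    simp
end

section
/- Let n ≥ 1, let S ⊆ [n] have even cardinality, and let (ν_p)_{p ∈ (0,1)} be a family of functions ν_p : {0,1}^n → ℝ such that for each ρ ∈ {0,1}^n the map p ↦ ν_p(ρ) is differentiable at p = 1/2, and such that for all T ⊆ S and all p ∈ (0,1), ν_p(0^T 1^{S∖T}) = ν_{1−p}(0^{S∖T} 1^T). Then Σ_{T ⊆ S} (−2)^{|T|} ν'_{1/2}(1^T) = 0, where ν'_{1/2}(1^T) denotes the derivative of p ↦ ν_p(1^T) at p = 1/2. -/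
open Finset

/-- `ν(0^A 1^B)`: the total mass of configurations equal to `0` on `A` and `1` on `B`. -/
def zeroOneProb {n : ℕ} (ν : (Fin n → Bool) → ℝ) (A B : Finset (Fin n)) : ℝ :=
  ∑ ρ ∈ univ.filter
    (fun ρ : Fin n → Bool => (∀ i ∈ A, ρ i = false) ∧ ∀ i ∈ B, ρ i = true), ν ρ

lemma sum_neg_two_pow_aux {n : ℕ} (A : Finset (Fin n)) :
    ∑ T ∈ A.powerset, (-2:ℝ)^T.card = (-1:ℝ)^A.card := by
  induction A using Finset.induction_on with
  | empty => simp
  | @insert a s ha ih =>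
    rw [Finset.sum_powerset_insert ha, ih,
      Finset.sum_congr rfl (fun T hT => by
        rw [Finset.card_insert_of_notMem (fun h => ha (Finset.mem_powerset.1 hT h))]),
      Finset.sum_congr rfl (fun T _ => pow_succ (-2:ℝ) T.card), ← Finset.sum_mul, ih]
    rw [Finset.card_insert_of_notMem ha, pow_succ]
    ring

lemma neg_one_pow_sdiff_aux {n : ℕ} {S T : Finset (Fin n)} (hS : Even S.card) (hT : T ⊆ S) :
    ((-1:ℝ))^(S \ T).card = (-1:ℝ)^T.card := by
  have hc : (S \ T).card + T.card = S.card := Finset.card_sdiff_add_card_eq_card hT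
  have h1 : ((-1:ℝ))^((S \ T).card + T.card) = 1 := by rw [hc]; exact hS.neg_one_pow
  rw [pow_add] at h1
  have h2 : ((-1:ℝ))^T.card * (-1:ℝ)^T.card = 1 := by
    rw [← pow_add]; exact Even.neg_one_pow ⟨T.card, rfl⟩
  calc ((-1:ℝ))^(S \ T).card = ((-1:ℝ))^(S \ T).card * ((-1:ℝ)^T.card * (-1:ℝ)^T.card) := by
        rw [h2, mul_one]
    _ = ((-1:ℝ))^(S \ T).card * (-1:ℝ)^T.card * (-1:ℝ)^T.card := by ring
    _ = (-1:ℝ)^T.card := by rw [h1, one_mul]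

lemma keyAlg_aux {n : ℕ} (S : Finset (Fin n)) (hS : Even S.card) (μ : (Fin n → Bool) → ℝ) :
    ∑ T ∈ S.powerset, (-2:ℝ)^T.card * zeroOneProb μ ∅ T
      = ∑ T ∈ S.powerset, (-1:ℝ)^T.card * zeroOneProb μ T (S \ T) := by
  unfold zeroOneProb
  simp only [Finset.sum_filter, Finset.mul_sum, mul_ite, mul_zero]
  rw [Finset.sum_comm, Finset.sum_comm (s := S.powerset)]
  refine Finset.sum_congr rfl fun ρ _ => ?_
  have hL : ∑ T ∈ S.powerset,
      (if (∀ i ∈ (∅ : Finset (Fin n)), ρ i = false) ∧ ∀ i ∈ T, ρ i = true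
        then (-2:ℝ)^T.card * μ ρ else 0)
      = (-1:ℝ)^(S.filter (fun i => ρ i = true)).card * μ ρ := by
    rw [← Finset.sum_filter]
    have hset : S.powerset.filter
        (fun T => (∀ i ∈ (∅ : Finset (Fin n)), ρ i = false) ∧ ∀ i ∈ T, ρ i = true)
        = (S.filter (fun i => ρ i = true)).powerset := by
      ext T
      simp only [Finset.mem_filter, Finset.mem_powerset, Finset.notMem_empty,
        false_implies, implies_true, true_and, Finset.subset_iff]
      exact ⟨fun h i hi => ⟨h.1 hi, h.2 i hi⟩, fun h => ⟨fun i hi => (h hi).1, fun i hi => (h hi).2⟩⟩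
    rw [hset, ← Finset.sum_mul, sum_neg_two_pow_aux]
  have hR : ∑ T ∈ S.powerset,
      (if (∀ i ∈ T, ρ i = false) ∧ ∀ i ∈ S \ T, ρ i = true
        then (-1:ℝ)^T.card * μ ρ else 0)
      = (-1:ℝ)^(S.filter (fun i => ρ i = false)).card * μ ρ := by
    set T0 := S.filter (fun i => ρ i = false) with hT0
    have key : ∀ T ∈ S.powerset,
        (((∀ i ∈ T, ρ i = false) ∧ ∀ i ∈ S \ T, ρ i = true) ↔ T = T0) := by
      intro T hT
      rw [Finset.mem_powerset] at hT
      constructor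
      · rintro ⟨h1, h2⟩
        ext i
        simp only [hT0, Finset.mem_filter]
        constructor
        · intro hi; exact ⟨hT hi, h1 i hi⟩
        · rintro ⟨hiS, hif⟩
          by_contra hc
          have := h2 i (Finset.mem_sdiff.2 ⟨hiS, hc⟩)
          rw [hif] at this; exact Bool.false_ne_true this
      · rintro rfl
        refine ⟨fun i hi => (Finset.mem_filter.1 hi).2, fun i hi => ?_⟩
        rcases Finset.mem_sdiff.1 hi with ⟨hiS, hiT⟩
        cases h : ρ i with
        | true => rfl
        | false => exact absurd (Finset.mem_filter.2 ⟨hiS, h⟩) hiT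
    rw [Finset.sum_congr rfl (fun T hT => if_congr (key T hT) rfl rfl)]
    rw [Finset.sum_eq_single T0 (fun T _ hne => if_neg hne)
      (fun h => absurd (Finset.mem_powerset.2 (Finset.filter_subset _ _)) h), if_pos rfl]
  rw [hL, hR]
  congr 1
  have : (S.filter (fun i => ρ i = true)).card + (S.filter (fun i => ρ i = false)).card
      = S.card := by
    have hneg : S.filter (fun i => ¬ ρ i = true) = S.filter (fun i => ρ i = false) := by
      apply Finset.filter_congr; intro i _; simp [Bool.not_eq_true]
    rw [← hneg]
    exact Finset.card_filter_add_card_filter_not (p := fun i => ρ i = true)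
  have h1 : ((-1:ℝ))^((S.filter (fun i => ρ i = true)).card
      + (S.filter (fun i => ρ i = false)).card) = 1 := by rw [this]; exact hS.neg_one_pow
  rw [pow_add] at h1
  have h2 : ((-1:ℝ))^(S.filter (fun i => ρ i = false)).card
      * (-1:ℝ)^(S.filter (fun i => ρ i = false)).card = 1 := by
    rw [← pow_add]; exact Even.neg_one_pow ⟨_, rfl⟩
  calc ((-1:ℝ))^(S.filter (fun i => ρ i = true)).card
      = ((-1:ℝ))^(S.filter (fun i => ρ i = true)).card
        * (((-1:ℝ))^(S.filter (fun i => ρ i = false)).card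
          * ((-1:ℝ))^(S.filter (fun i => ρ i = false)).card) := by rw [h2, mul_one]
    _ = (((-1:ℝ))^(S.filter (fun i => ρ i = true)).card
          * ((-1:ℝ))^(S.filter (fun i => ρ i = false)).card)
        * ((-1:ℝ))^(S.filter (fun i => ρ i = false)).card := by ring
    _ = ((-1:ℝ))^(S.filter (fun i => ρ i = false)).card := by rw [h1, one_mul]

/-- if `|S|` is even, each `p ↦ ν_p(ρ)` is differentiable at `1/2`, and
`ν_p(0^T 1^{S∖T}) = ν_{1-p}(0^{S∖T} 1^T)` for all `T ⊆ S` and `p ∈ (0,1)`, then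
`Σ_{T ⊆ S} (-2)^{|T|} ν'_{1/2}(1^T) = 0`. -/
theorem even_rows_zero (n : ℕ) (hn : 1 ≤ n) (S : Finset (Fin n)) (hS : Even S.card)
    (ν : ℝ → ((Fin n → Bool) → ℝ))
    (hdiff : ∀ ρ : Fin n → Bool, DifferentiableAt ℝ (fun p => ν p ρ) (1/2))
    (hsym : ∀ T ⊆ S, ∀ p ∈ Set.Ioo (0:ℝ) 1,
      zeroOneProb (ν p) T (S \ T) = zeroOneProb (ν (1 - p)) (S \ T) T) :
    ∑ T ∈ S.powerset, (-2:ℝ) ^ T.card *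
      deriv (fun p => zeroOneProb (ν p) ∅ T) (1/2) = 0 := by
  have hd : ∀ (A B : Finset (Fin n)),
      DifferentiableAt ℝ (fun p => zeroOneProb (ν p) A B) (1/2) := by
    intro A B
    unfold zeroOneProb
    exact DifferentiableAt.fun_sum (fun ρ _ => hdiff ρ)
  set F : ℝ → ℝ := fun p => ∑ T ∈ S.powerset, (-1:ℝ)^T.card * zeroOneProb (ν p) T (S \ T)
    with hF
  have hFsym : ∀ p ∈ Set.Ioo (0:ℝ) 1, F p = F (1 - p) := by
    intro p hp
    rw [hF]
    simp only
    rw [Finset.sum_congr rfl (fun T hT => by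
      rw [hsym T (Finset.mem_powerset.1 hT) p hp])]
    refine Finset.sum_nbij' (fun T => S \ T) (fun T => S \ T) ?_ ?_ ?_ ?_ ?_
    · intro T hT; exact Finset.mem_powerset.2 (Finset.sdiff_subset)
    · intro T hT; exact Finset.mem_powerset.2 (Finset.sdiff_subset)
    · intro T hT; exact Finset.sdiff_sdiff_eq_self (Finset.mem_powerset.1 hT)
    · intro T hT; exact Finset.sdiff_sdiff_eq_self (Finset.mem_powerset.1 hT)
    · intro T hT
      rw [neg_one_pow_sdiff_aux hS (Finset.mem_powerset.1 hT),
        Finset.sdiff_sdiff_eq_self (Finset.mem_powerset.1 hT)]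
  have hderiv0 : deriv F (1/2) = 0 := by
    have hev : F =ᶠ[nhds (1/2:ℝ)] (fun p => F (1 - p)) := by
      filter_upwards [isOpen_Ioo.mem_nhds (by norm_num : (1/2:ℝ) ∈ Set.Ioo 0 1)] with p hp
      exact hFsym p hp
    have := hev.deriv_eq
    rw [deriv_comp_const_sub] at this
    have h12 : (1:ℝ) - 1/2 = 1/2 := by norm_num
    rw [h12] at this
    linarith
  calc ∑ T ∈ S.powerset, (-2:ℝ) ^ T.card * deriv (fun p => zeroOneProb (ν p) ∅ T) (1/2)
      = ∑ T ∈ S.powerset, deriv (fun p => (-2:ℝ) ^ T.card * zeroOneProb (ν p) ∅ T) (1/2) := by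
        exact Finset.sum_congr rfl (fun T _ => (deriv_const_mul _ (hd ∅ T)).symm)
    _ = deriv (fun p => ∑ T ∈ S.powerset, (-2:ℝ) ^ T.card * zeroOneProb (ν p) ∅ T) (1/2) := by
        rw [deriv_fun_sum (fun T _ => (hd ∅ T).const_mul _)]
    _ = deriv F (1/2) := by
        congr 1; funext p; exact keyAlg_aux S hS (ν p)
    _ = 0 := hderiv0
end

section
/- Let n ≥ 1, let σ ∈ B_n be a partition of [n], and let S ⊆ [n]. Then Σ_{S' ⊆ S} (−1/2)^{|S|−|S'|} · 2^{−‖σ_{S'}‖} equals 2^{−|S|} if every block of the restriction σ_S has even cardinality, and equals 0 otherwise. -/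
open Finset

variable {α : Type*} [DecidableEq α]

lemma sum_powerset_union_disj {M : Type*} [AddCommMonoid M] {s t : Finset α}
    (h : Disjoint s t) (f : Finset α → M) :
    ∑ u ∈ (s ∪ t).powerset, f u = ∑ a ∈ s.powerset, ∑ b ∈ t.powerset, f (a ∪ b) := by
  have hp : ∑ p ∈ s.powerset ×ˢ t.powerset, f (p.1 ∪ p.2)
      = ∑ a ∈ s.powerset, ∑ b ∈ t.powerset, f (a ∪ b) :=
    Finset.sum_product (s := s.powerset) (t := t.powerset) (f := fun p => f (p.1 ∪ p.2))
  rw [← hp]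
  refine (Finset.sum_nbij' (i := fun p => p.1 ∪ p.2) (j := fun u => (u ∩ s, u ∩ t))
    ?_ ?_ ?_ ?_ ?_).symm
  · intro p hp
    simp only [mem_product, mem_powerset] at hp
    exact mem_powerset.2 (union_subset_union hp.1 hp.2)
  · intro u hu
    simp only [mem_powerset] at hu
    simp only [mem_product, mem_powerset]
    exact ⟨inter_subset_right, inter_subset_right⟩
  · intro p hp
    simp only [mem_product, mem_powerset] at hp
    have h1 : Disjoint p.2 s := (h.symm.mono_left hp.2)
    have h2 : Disjoint p.1 t := (h.mono_left hp.1)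
    ext : 1
    · simp [union_inter_distrib_right, inter_eq_left.2 hp.1,
        Finset.disjoint_iff_inter_eq_empty.1 h1]
    · simp [union_inter_distrib_right, inter_eq_left.2 hp.2,
        Finset.disjoint_iff_inter_eq_empty.1 h2]
  · intro u hu
    simp only [mem_powerset] at hu
    show u ∩ s ∪ u ∩ t = u
    rw [← inter_union_distrib_left, inter_eq_left.2 hu]
  · intro p hp; rfl

lemma myInnerSum (C : Finset α) :
    ∑ T ∈ C.powerset, (-(1:ℝ)/2) ^ (C.card - T.card) * (if T.Nonempty then (2:ℝ)⁻¹ else 1)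
      = if Even C.card then (2:ℝ)⁻¹ ^ C.card else 0 := by
  have h1 : ∀ T : Finset α, (if T.Nonempty then (2:ℝ)⁻¹ else 1)
      = 2⁻¹ + (if T = ∅ then 2⁻¹ else 0) := by
    intro T
    rcases T.eq_empty_or_nonempty with h | h
    · simp [h]; norm_num
    · simp [h, h.ne_empty]
  simp_rw [h1, mul_add, Finset.sum_add_distrib]
  have h2 : ∑ T ∈ C.powerset, (-(1:ℝ)/2) ^ (C.card - T.card) * 2⁻¹
      = 2⁻¹ * (2:ℝ)⁻¹ ^ C.card := by
    rw [← Finset.sum_mul, mul_comm]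
    congr 1
    have := Finset.sum_pow_mul_eq_add_pow (1:ℝ) (-(1:ℝ)/2) C
    simp only [one_pow, one_mul] at this
    rw [this]; norm_num
  have h3 : ∑ T ∈ C.powerset, (-(1:ℝ)/2) ^ (C.card - T.card) * (if T = ∅ then (2:ℝ)⁻¹ else 0)
      = 2⁻¹ * (-(1:ℝ)/2) ^ C.card := by
    rw [Finset.sum_eq_single ∅]
    · simp [mul_comm]
    · intro b _ hb; simp [hb]
    · intro h; exact absurd (Finset.empty_mem_powerset C) h
  rw [h2, h3]
  rcases Nat.even_or_odd C.card with h | h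
  · rw [if_pos h, show (-(1:ℝ)/2) = -(2⁻¹) by norm_num, h.neg_pow]
    ring
  · rw [if_neg (Nat.not_even_iff_odd.2 h), show (-(1:ℝ)/2) = -(2⁻¹) by norm_num, h.neg_pow]
    ring

lemma key_lemma (F : Finset (Finset α)) (hd : (F : Set (Finset α)).PairwiseDisjoint id) :
    ∑ S' ∈ (F.sup id).powerset, (-(1:ℝ)/2) ^ ((F.sup id).card - S'.card)
        * ∏ C ∈ F, (if (C ∩ S').Nonempty then (2:ℝ)⁻¹ else 1)
      = if ∀ C ∈ F, Even C.card then (2:ℝ)⁻¹ ^ (F.sup id).card else 0 := by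
  induction F using Finset.induction_on with
  | empty => simp
  | @insert C F' hC ih =>
    have hd' : (F' : Set (Finset α)).PairwiseDisjoint id :=
      hd.subset (Finset.coe_subset.2 (Finset.subset_insert C F'))
    have hdisj : Disjoint C (F'.sup id) := by
      rw [Finset.disjoint_sup_right]
      intro D hD
      exact hd (by simp) (by simp [hD]) (fun h => hC (h ▸ hD))
    rw [Finset.sup_insert]
    have hsup : (id C ⊔ F'.sup id) = C ∪ F'.sup id := rfl
    rw [hsup, sum_powerset_union_disj hdisj]
    have hcard : (C ∪ F'.sup id).card = C.card + (F'.sup id).card :=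
      Finset.card_union_of_disjoint hdisj
    have step : ∀ T ∈ C.powerset, ∀ U ∈ (F'.sup id).powerset,
        (-(1:ℝ)/2) ^ ((C ∪ F'.sup id).card - (T ∪ U).card)
          * ∏ D ∈ insert C F', (if (D ∩ (T ∪ U)).Nonempty then (2:ℝ)⁻¹ else 1)
        = ((-(1:ℝ)/2) ^ (C.card - T.card) * (if T.Nonempty then (2:ℝ)⁻¹ else 1))
          * ((-(1:ℝ)/2) ^ ((F'.sup id).card - U.card)
            * ∏ D ∈ F', (if (D ∩ U).Nonempty then (2:ℝ)⁻¹ else 1)) := by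
      intro T hT U hU
      rw [mem_powerset] at hT hU
      have hTU : Disjoint T U := hdisj.mono hT hU
      have hcTU : (T ∪ U).card = T.card + U.card := Finset.card_union_of_disjoint hTU
      have hCT : C ∩ (T ∪ U) = T := by
        rw [inter_union_distrib_left, inter_eq_right.2 hT,
          Finset.disjoint_iff_inter_eq_empty.1 (hdisj.mono_right hU), union_empty]
      have hDU : ∀ D ∈ F', D ∩ (T ∪ U) = D ∩ U := by
        intro D hD
        have hCD : Disjoint C D := by
          rw [Finset.disjoint_sup_right] at hdisj
          exact hd (by simp) (by simp [hD]) (fun h => hC (h ▸ hD))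
        rw [inter_union_distrib_left,
          Finset.disjoint_iff_inter_eq_empty.1 (hCD.symm.mono_right hT), empty_union]
      rw [Finset.prod_insert hC, hCT,
        Finset.prod_congr rfl (fun D hD => by rw [hDU D hD]), hcard, hcTU]
      have hT' := Finset.card_le_card hT
      have hU' := Finset.card_le_card hU
      rw [show C.card + (F'.sup id).card - (T.card + U.card)
          = (C.card - T.card) + ((F'.sup id).card - U.card) by omega, pow_add]
      ring
    rw [Finset.sum_congr rfl (fun T hT => Finset.sum_congr rfl (fun U hU => step T hT U hU))]
    simp_rw [← Finset.mul_sum]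
    rw [← Finset.sum_mul, myInnerSum, ih hd', hcard, pow_add]
    rcases Nat.even_or_odd C.card with h | h
    · by_cases h2 : ∀ D ∈ F', Even D.card
      · have hall : ∀ D ∈ insert C F', Even D.card := by
          intro D hD
          rcases Finset.mem_insert.1 hD with rfl | hD
          · exact h
          · exact h2 D hD
        rw [if_pos h, if_pos h2, if_pos hall]
      · rw [if_neg h2, mul_zero,
          if_neg (fun hall => h2 fun D hD => hall D (mem_insert_of_mem hD))]
    · rw [if_neg (Nat.not_even_iff_odd.2 h), zero_mul,
        if_neg (fun hall => (Nat.not_even_iff_odd.2 h) (hall C (mem_insert_self _ _)))]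


/-- `‖σ_S‖`: the number of blocks of the restriction of `σ` to `S`, i.e. the number of
blocks of `σ` meeting `S`. -/
def numBlocksOn {n : ℕ} (σ : Finpartition (univ : Finset (Fin n))) (S : Finset (Fin n)) : ℕ :=
  (σ.parts.filter fun B => (B ∩ S).Nonempty).card

/-- `Σ_{S' ⊆ S} (-1/2)^{|S|-|S'|} 2^{-‖σ_{S'}‖}` equals `2^{-|S|}` if every
block of `σ_S` has even size, and `0` otherwise. -/
theorem sum_even_blocks (n : ℕ) (hn : 1 ≤ n) (σ : Finpartition (univ : Finset (Fin n)))
    (S : Finset (Fin n)) :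
    ∑ S' ∈ S.powerset, (-(1:ℝ)/2) ^ (S.card - S'.card) * (2:ℝ)⁻¹ ^ numBlocksOn σ S'
      = if ∀ B ∈ σ.parts, Even (B ∩ S).card then (2:ℝ)⁻¹ ^ S.card else 0 := by
  classical
  set P := σ.parts.filter fun B => (B ∩ S).Nonempty with hP
  set F := P.image (· ∩ S) with hF
  -- distinct blocks are disjoint
  have hblocks : ∀ B ∈ σ.parts, ∀ B' ∈ σ.parts, B ≠ B' → Disjoint B B' := by
    intro B hB B' hB' hne
    exact σ.disjoint hB hB' hne
  -- injectivity of intersection map on P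
  have hinj : ∀ B ∈ P, ∀ B' ∈ P, B ∩ S = B' ∩ S → B = B' := by
    intro B hB B' hB' heq
    by_contra hne
    rw [mem_filter] at hB hB'
    obtain ⟨x, hx⟩ := hB.2
    have hx' : x ∈ B' ∩ S := heq ▸ hx
    exact Finset.disjoint_left.1 (hblocks B hB.1 B' hB'.1 hne) (mem_inter.1 hx).1
      (mem_inter.1 hx').1
  -- F.sup id = S
  have hsupF : F.sup id = S := by
    apply le_antisymm
    · apply Finset.sup_le
      intro C hC
      obtain ⟨B, _, rfl⟩ := Finset.mem_image.1 hC
      exact inter_subset_right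
    · intro x hx
      obtain ⟨B, hB, hxB⟩ := σ.exists_mem (Finset.mem_univ x)
      have hBP : B ∈ P := mem_filter.2 ⟨hB, ⟨x, mem_inter.2 ⟨hxB, hx⟩⟩⟩
      exact Finset.mem_sup.2 ⟨B ∩ S, Finset.mem_image_of_mem _ hBP,
        mem_inter.2 ⟨hxB, hx⟩⟩
  -- pairwise disjointness of F
  have hdF : (F : Set (Finset (Fin n))).PairwiseDisjoint id := by
    intro C hC C' hC' hne
    obtain ⟨B, hB, rfl⟩ := Finset.mem_image.1 (Finset.mem_coe.1 hC)
    obtain ⟨B', hB', rfl⟩ := Finset.mem_image.1 (Finset.mem_coe.1 hC')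
    have hBB' : B ≠ B' := fun h => hne (h ▸ rfl)
    exact (hblocks B (mem_filter.1 hB).1 B' (mem_filter.1 hB').1 hBB').mono
      inter_subset_left inter_subset_left
  -- product over F equals 2⁻¹ ^ numBlocksOn
  have hprod : ∀ S' ∈ S.powerset,
      ∏ C ∈ F, (if (C ∩ S').Nonempty then (2:ℝ)⁻¹ else 1) = (2:ℝ)⁻¹ ^ numBlocksOn σ S' := by
    intro S' hS'
    rw [mem_powerset] at hS'
    rw [hF, Finset.prod_image (fun B hB B' hB' h => hinj B hB B' hB' h)]
    have h1 : ∀ B ∈ P, (if ((B ∩ S) ∩ S').Nonempty then (2:ℝ)⁻¹ else 1)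
        = (if (B ∩ S').Nonempty then (2:ℝ)⁻¹ else 1) := by
      intro B hB
      rw [inter_assoc, inter_eq_right.2 hS']
    rw [Finset.prod_congr rfl h1, Finset.prod_ite, Finset.prod_const, Finset.prod_const_one,
      mul_one]
    congr 1
    rw [hP, Finset.filter_filter]
    unfold numBlocksOn
    congr 1
    apply Finset.filter_congr
    intro B _
    constructor
    · tauto
    · intro h
      exact ⟨h.mono (inter_subset_inter le_rfl hS'), h⟩
  -- even condition equivalence
  have heven : (∀ C ∈ F, Even C.card) ↔ (∀ B ∈ σ.parts, Even (B ∩ S).card) := by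
    constructor
    · intro h B hB
      rcases (B ∩ S).eq_empty_or_nonempty with he | hne
      · simp [he]
      · exact h (B ∩ S) (Finset.mem_image_of_mem _ (mem_filter.2 ⟨hB, hne⟩))
    · intro h C hC
      obtain ⟨B, hB, rfl⟩ := Finset.mem_image.1 hC
      exact h B (mem_filter.1 hB).1
  have hmain := key_lemma F hdF
  rw [hsupF] at hmain
  have hsum : ∑ S' ∈ S.powerset, (-(1:ℝ)/2) ^ (S.card - S'.card) * (2:ℝ)⁻¹ ^ numBlocksOn σ S'
      = ∑ S' ∈ S.powerset, (-(1:ℝ)/2) ^ (S.card - S'.card)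
          * ∏ C ∈ F, (if (C ∩ S').Nonempty then (2:ℝ)⁻¹ else 1) :=
    Finset.sum_congr rfl fun S' hS' => by rw [hprod S' hS']
  rw [hsum, hmain]
  by_cases hcase : ∀ B ∈ σ.parts, Even (B ∩ S).card
  · rw [if_pos (heven.2 hcase), if_pos hcase]
  · rw [if_neg (fun h => hcase (heven.1 h)), if_neg hcase]
end

section
/- Let n ≥ 1, let σ ∈ B_n be a partition of [n], and let S ⊆ [n]. Then Σ_{S' ⊆ S} (−1/2)^{|S|−|S'|} · ‖σ_{S'}‖ · 2^{−‖σ_{S'}‖+1} equals 2^{−|S|+1} if the restriction σ_S has exactly one block of odd cardinality, and equals 0 otherwise. -/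
open Finset

lemma sum_powerset_pow_aux {α : Type*} [DecidableEq α] (A : Finset α) (r : ℝ) :
    ∑ T ∈ A.powerset, r ^ (A.card - T.card) = (1 + r) ^ A.card := by
  induction A using Finset.induction with
  | empty => simp
  | @insert a A ha ih =>
    rw [sum_powerset_insert ha]
    have h1 : ∀ T ∈ A.powerset, r ^ ((insert a A).card - T.card) = r * r ^ (A.card - T.card) := by
      intro T hT
      rw [card_insert_of_notMem ha, ← pow_succ']
      congr 1
      have := card_le_card (mem_powerset.mp hT); omega
    have h2 : ∀ T ∈ A.powerset,
        r ^ ((insert a A).card - (insert a T).card) = r ^ (A.card - T.card) := by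
      intro T hT
      have hT' := mem_powerset.mp hT
      rw [card_insert_of_notMem (fun h => ha (hT' h)), card_insert_of_notMem ha]
      congr 1
      omega
    rw [sum_congr rfl h1, sum_congr rfl h2, ← mul_sum, ih, card_insert_of_notMem ha, pow_succ]
    ring

lemma filter_card_split {α : Type*} [DecidableEq α] {P : Finset α} {B : α} (hB : B ∈ P)
    (q r : α → Prop) [DecidablePred q] [DecidablePred r]
    (hqr : ∀ B' ∈ P, B' ≠ B → (q B' ↔ r B')) (hrB : ¬ r B) :
    (P.filter q).card = (if q B then 1 else 0) + (P.filter r).card := by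
  have hP : insert B (P.erase B) = P := insert_erase hB
  have he : (P.erase B).filter q = (P.erase B).filter r :=
    filter_congr (fun B' h => hqr B' (mem_of_mem_erase h) (ne_of_mem_erase h))
  rw [← hP, filter_insert, filter_insert, if_neg hrB]
  by_cases hq : q B
  · rw [if_pos hq,
      card_insert_of_notMem (fun h => (notMem_erase B P) (mem_filter.mp h).1), he]
    simp only [if_pos hq]
    omega
  · rw [if_neg hq, he]; simp [hq]

lemma sum_powerset_union_disjoint {α : Type*} [DecidableEq α] {A C : Finset α}
    (h : Disjoint A C) (f : Finset α → ℝ) :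
    ∑ S' ∈ (A ∪ C).powerset, f S' = ∑ T ∈ A.powerset, ∑ U ∈ C.powerset, f (T ∪ U) := by
  have hrw : ∑ T ∈ A.powerset, ∑ U ∈ C.powerset, f (T ∪ U)
      = ∑ p ∈ A.powerset ×ˢ C.powerset, f (p.1 ∪ p.2) :=
    (Finset.sum_product A.powerset C.powerset (fun p => f (p.1 ∪ p.2))).symm
  rw [hrw]
  refine Finset.sum_nbij' (fun S' => (S' ∩ A, S' ∩ C)) (fun p => p.1 ∪ p.2) ?_ ?_ ?_ ?_ ?_
  · intro S' hS'
    simp only [mem_product, mem_powerset]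
    exact ⟨inter_subset_right, inter_subset_right⟩
  · intro p hp
    simp only [mem_product, mem_powerset] at hp ⊢
    exact union_subset (hp.1.trans subset_union_left) (hp.2.trans subset_union_right)
  · intro S' hS'
    simp only [mem_powerset] at hS'
    dsimp only
    rw [← inter_union_distrib_left, inter_eq_left.mpr hS']
  · intro p hp
    simp only [mem_product, mem_powerset] at hp
    have h1 : p.1 ∩ A = p.1 := inter_eq_left.mpr hp.1
    have h2 : p.2 ∩ A = ∅ := by
      rw [← subset_empty]
      intro y hy
      exact absurd rfl (h.symm.forall_ne_finset (hp.2 (mem_inter.mp hy).1) (mem_inter.mp hy).2)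
    have h3 : p.1 ∩ C = ∅ := by
      rw [← subset_empty]
      intro y hy
      exact absurd rfl (h.forall_ne_finset (hp.1 (mem_inter.mp hy).1) (mem_inter.mp hy).2)
    have h4 : p.2 ∩ C = p.2 := inter_eq_left.mpr hp.2
    ext <;> simp [union_inter_distrib_right, h1, h2, h3, h4]
  · intro S' hS'
    simp only [mem_powerset] at hS'
    dsimp only
    rw [← inter_union_distrib_left, inter_eq_left.mpr hS']

lemma keyPoly {n : ℕ} (σ : Finpartition (univ : Finset (Fin n))) (S : Finset (Fin n)) (x : ℝ) :
    ∑ S' ∈ S.powerset, (-(1:ℝ)/2) ^ (S.card - S'.card) * x ^ numBlocksOn σ S'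
      = (2:ℝ)⁻¹ ^ S.card
        * (2*x - 1) ^ (σ.parts.filter fun B => Odd (B ∩ S).card).card := by
  induction S using Finset.strongInduction with
  | _ S ih =>
  rcases S.eq_empty_or_nonempty with rfl | ⟨s, hs⟩
  · simp [numBlocksOn]
  · obtain ⟨B, hBparts, hsB⟩ := σ.exists_mem (mem_univ s)
    set A := B ∩ S with hA
    have hAne : A.Nonempty := ⟨s, mem_inter.mpr ⟨hsB, hs⟩⟩
    have hAS : A ⊆ S := inter_subset_right
    set Cs := S \ A with hCs
    have hdisj : Disjoint A Cs := disjoint_sdiff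
    have hunion : A ∪ Cs = S := union_sdiff_of_subset hAS
    have hCsub : Cs ⊂ S := sdiff_ssubset hAS hAne
    have hBC : B ∩ Cs = ∅ := by
      ext y; simp only [hCs, hA, mem_inter, mem_sdiff, notMem_empty, iff_false]
      tauto
    have hB'A : ∀ B' ∈ σ.parts, B' ≠ B → B' ∩ A = ∅ := by
      intro B' hB' hne
      have hd : Disjoint B' B := σ.disjoint hB' hBparts hne
      ext y
      simp only [mem_inter, notMem_empty, iff_false, hA]
      rintro ⟨h1, h2, _⟩
      exact absurd rfl (hd.forall_ne_finset h1 h2)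
    have hcard : S.card = A.card + Cs.card := by
      rw [← hunion, card_union_of_disjoint hdisj]
    -- number-of-blocks decomposition
    have hnb : ∀ T ∈ A.powerset, ∀ U ∈ Cs.powerset,
        numBlocksOn σ (T ∪ U) = (if T.Nonempty then 1 else 0) + numBlocksOn σ U := by
      intro T hT U hU
      rw [mem_powerset] at hT hU
      unfold numBlocksOn
      have hBU : B ∩ U = ∅ :=
        subset_empty.mp ((inter_subset_inter Subset.rfl hU).trans hBC.le)
      have hAB : A ⊆ B := by rw [hA]; exact inter_subset_left
      have hBT : B ∩ T = T := inter_eq_right.mpr (hT.trans hAB)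
      have hsp := filter_card_split (P := σ.parts) hBparts
        (fun B' => (B' ∩ (T ∪ U)).Nonempty) (fun B' => (B' ∩ U).Nonempty) ?_ ?_
      · rw [hsp]
        congr 1
        have h5 : B ∩ (T ∪ U) = T := by rw [inter_union_distrib_left, hBT, hBU, union_empty]
        simp only [h5]
      · intro B' hB' hne
        have h0 : B' ∩ T = ∅ :=
          subset_empty.mp ((inter_subset_inter Subset.rfl hT).trans (hB'A B' hB' hne).le)
        show (B' ∩ (T ∪ U)).Nonempty ↔ (B' ∩ U).Nonempty
        rw [inter_union_distrib_left, h0, empty_union]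
      · show ¬ (B ∩ U).Nonempty
        rw [hBU]; exact not_nonempty_empty
    -- odd-block-count decomposition
    have hm : (σ.parts.filter fun B' => Odd (B' ∩ S).card).card
        = (if Odd A.card then 1 else 0)
          + (σ.parts.filter fun B' => Odd (B' ∩ Cs).card).card := by
      have hsp := filter_card_split (P := σ.parts) hBparts
        (fun B' => Odd (B' ∩ S).card) (fun B' => Odd (B' ∩ Cs).card) ?_ ?_
      · rw [hsp]
      · intro B' hB' hne
        have h1 := hB'A B' hB' hne
        have h1' : ∀ y, y ∈ B' → y ∉ A := fun y hy hyA =>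
          (notMem_empty y) (h1 ▸ mem_inter.mpr ⟨hy, hyA⟩)
        have h0 : B' ∩ Cs = B' ∩ S := by
          ext y
          simp only [hCs, mem_inter, mem_sdiff]
          constructor
          · rintro ⟨h2, h3, _⟩; exact ⟨h2, h3⟩
          · rintro ⟨h2, h3⟩; exact ⟨h2, h3, h1' y h2⟩
        show Odd (B' ∩ S).card ↔ Odd (B' ∩ Cs).card
        rw [h0]
      · show ¬ Odd (B ∩ Cs).card
        rw [hBC]; simp
    conv_lhs => rw [← hunion]
    rw [sum_powerset_union_disjoint hdisj]
    have hterm : ∀ T ∈ A.powerset, ∀ U ∈ Cs.powerset,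
        (-(1:ℝ)/2) ^ ((A ∪ Cs).card - (T ∪ U).card) * x ^ numBlocksOn σ (T ∪ U)
        = ((-(1:ℝ)/2) ^ (A.card - T.card) * x ^ (if T.Nonempty then 1 else 0))
          * ((-(1:ℝ)/2) ^ (Cs.card - U.card) * x ^ numBlocksOn σ U) := by
      intro T hT U hU
      have hTA := card_le_card (mem_powerset.mp hT)
      have hUC := card_le_card (mem_powerset.mp hU)
      have hTU : Disjoint T U :=
        hdisj.mono (mem_powerset.mp hT) (mem_powerset.mp hU)
      have he : (A ∪ Cs).card - (T ∪ U).card = (A.card - T.card) + (Cs.card - U.card) := by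
        rw [card_union_of_disjoint hdisj, card_union_of_disjoint hTU]; omega
      rw [he, hnb T hT U hU, pow_add, pow_add]
      ring
    rw [sum_congr rfl (fun T hT => sum_congr rfl (fun U hU => hterm T hT U hU)),
      ← sum_mul_sum, ih Cs hCsub]
    -- the inner sum over T
    have hTsum : ∑ T ∈ A.powerset, (-(1:ℝ)/2) ^ (A.card - T.card)
          * x ^ (if T.Nonempty then 1 else 0)
        = x * ((2:ℝ)⁻¹ ^ A.card - (-(1:ℝ)/2) ^ A.card) + (-(1:ℝ)/2) ^ A.card := by
      have hmem : (∅ : Finset (Fin n)) ∈ A.powerset := empty_mem_powerset A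
      rw [← sum_erase_add _ _ hmem]
      have h1 : ∀ T ∈ A.powerset.erase ∅,
          (-(1:ℝ)/2) ^ (A.card - T.card) * x ^ (if T.Nonempty then 1 else 0)
          = x * (-(1:ℝ)/2) ^ (A.card - T.card) := by
        intro T hT
        have : T.Nonempty := nonempty_iff_ne_empty.mpr (ne_of_mem_erase hT)
        rw [if_pos this, pow_one]; ring
      rw [sum_congr rfl h1, ← mul_sum]
      have h2 : ∑ T ∈ A.powerset.erase ∅, (-(1:ℝ)/2) ^ (A.card - T.card)
          = (2:ℝ)⁻¹ ^ A.card - (-(1:ℝ)/2) ^ A.card := by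
        have h3 := sum_erase_add A.powerset
          (fun T => (-(1:ℝ)/2) ^ (A.card - T.card)) hmem
        have h4 := sum_powerset_pow_aux A (-(1:ℝ)/2)
        simp only [card_empty, Nat.sub_zero] at h3
        have h5 : (1 + -(1:ℝ)/2) = 2⁻¹ := by norm_num
        rw [h5] at h4
        linarith [h3, h4]
      rw [h2]
      simp
    rw [hTsum, hm, hcard]
    have hneg : (-(1:ℝ)/2) ^ A.card = (-1)^A.card * (2:ℝ)⁻¹ ^ A.card := by
      rw [← mul_pow]; norm_num
    by_cases hodd : Odd A.card
    · rw [if_pos hodd, hneg, Odd.neg_one_pow hodd, pow_add, pow_add, pow_one]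
      ring
    · rw [if_neg hodd, hneg, Even.neg_one_pow (Nat.not_odd_iff_even.mp hodd), pow_add, zero_add]
      ring

/-- `Σ_{S' ⊆ S} (-1/2)^{|S|-|S'|} ‖σ_{S'}‖ 2^{-‖σ_{S'}‖+1}` equals
`2^{-|S|+1}` if `σ_S` has exactly one odd-sized block, and `0` otherwise. -/
theorem sum_one_odd_block (n : ℕ) (hn : 1 ≤ n) (σ : Finpartition (univ : Finset (Fin n)))
    (S : Finset (Fin n)) :
    ∑ S' ∈ S.powerset, (-(1:ℝ)/2) ^ (S.card - S'.card) *
        ((numBlocksOn σ S' : ℝ) * ((2:ℝ)⁻¹ ^ numBlocksOn σ S' * 2))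
      = if (σ.parts.filter fun B => Odd (B ∩ S).card).card = 1
          then (2:ℝ)⁻¹ ^ S.card * 2 else 0 := by
  set m := (σ.parts.filter fun B => Odd (B ∩ S).card).card with hm
  -- derivative of the LHS-as-function at 1/2
  have hf : HasDerivAt
      (fun x : ℝ => ∑ S' ∈ S.powerset, (-(1:ℝ)/2) ^ (S.card - S'.card) * x ^ numBlocksOn σ S')
      (∑ S' ∈ S.powerset, (-(1:ℝ)/2) ^ (S.card - S'.card)
        * ((numBlocksOn σ S' : ℝ) * (2:ℝ)⁻¹ ^ (numBlocksOn σ S' - 1))) (2:ℝ)⁻¹ := by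
    apply HasDerivAt.fun_sum
    intro S' _
    exact (hasDerivAt_pow (numBlocksOn σ S') ((2:ℝ)⁻¹)).const_mul _
  -- derivative of the RHS-as-function at 1/2
  have hg0 : HasDerivAt (fun x : ℝ => 2*x - 1) 2 (2:ℝ)⁻¹ := by
    simpa using ((hasDerivAt_id ((2:ℝ)⁻¹)).const_mul 2).sub_const 1
  have hg : HasDerivAt
      (fun x : ℝ => (2:ℝ)⁻¹ ^ S.card * (2*x - 1) ^ m)
      ((2:ℝ)⁻¹ ^ S.card * ((m : ℝ) * (2*(2:ℝ)⁻¹ - 1) ^ (m - 1) * 2)) (2:ℝ)⁻¹ :=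
    (hg0.pow m).const_mul _
  have hfun : (fun x : ℝ => ∑ S' ∈ S.powerset,
        (-(1:ℝ)/2) ^ (S.card - S'.card) * x ^ numBlocksOn σ S')
      = (fun x : ℝ => (2:ℝ)⁻¹ ^ S.card * (2*x - 1) ^ m) := by
    funext x
    exact keyPoly σ S x
  rw [hfun] at hf
  have heq := hf.unique hg
  have hL : ∑ S' ∈ S.powerset, (-(1:ℝ)/2) ^ (S.card - S'.card) *
        ((numBlocksOn σ S' : ℝ) * ((2:ℝ)⁻¹ ^ numBlocksOn σ S' * 2))
      = ∑ S' ∈ S.powerset, (-(1:ℝ)/2) ^ (S.card - S'.card)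
        * ((numBlocksOn σ S' : ℝ) * (2:ℝ)⁻¹ ^ (numBlocksOn σ S' - 1)) := by
    apply sum_congr rfl
    intro S' _
    rcases Nat.eq_zero_or_pos (numBlocksOn σ S') with h0 | hpos
    · rw [h0]; simp
    · congr 1
      congr 1
      congr 1
      obtain ⟨k, hk⟩ := Nat.exists_eq_add_of_le hpos
      rw [hk]
      simp [pow_succ]
      ring
  rw [hL, heq]
  have h20 : (2*(2:ℝ)⁻¹ - 1) = 0 := by norm_num
  rw [h20]
  rcases Nat.lt_trichotomy m 1 with h1 | h1 | h1
  · interval_cases m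
    simp
  · rw [h1]; norm_num
  · rw [if_neg (by omega)]
    have : (0:ℝ) ^ (m - 1) = 0 := zero_pow (by omega)
    rw [this]
    ring
end

section
/- Fix J > 0. The linear system in (q_1, q_2, q_3) ∈ ℝ³ given by: q_1 + q_2 + q_3 = 1; q_1/2 + q_2/3 + q_3/4 = (e^{3J} + e^{−J}) / (2e^{3J} + 6e^{−J}); q_1 + q_2 + (3/4) q_3 = 3e^{3J} / (3e^{3J} + e^{−J}), has a unique solution; this solution satisfies q_1 > 0, q_2 > 0, q_3 > 0, and moreover q_2 = 12(e^{4J} − 1) / ((3 + e^{4J})(1 + 3e^{4J})). -/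
open Real

private theorem ising_core (t x y z : ℝ) (ht : 1 < t)
    (h1 : x + y + z = 1)
    (h2 : x / 2 + y / 3 + z / 4 = (t + 1) / (2 * t + 6))
    (h3 : x + y + 3 * z / 4 = 3 * t / (3 * t + 1)) :
    x = 3 * (t - 1)^2 / ((3 + t) * (1 + 3 * t)) ∧
    y = 12 * (t - 1) / ((3 + t) * (1 + 3 * t)) ∧
    z = 4 * (3 + t) / ((3 + t) * (1 + 3 * t)) := by
  have hA : (2 * t + 6) ≠ 0 := by nlinarith
  have hB : (3 * t + 1) ≠ 0 := by nlinarith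
  have hC : (3 + t) ≠ 0 := by nlinarith
  have hD : (1 + 3 * t) ≠ 0 := by nlinarith
  field_simp at h2 h3 ⊢
  refine ⟨?_, ?_, ?_⟩
  · linear_combination ((3*t+1)/8)*h2 - ((3+t)/2)*h3
  · linear_combination (-3*(3*t+1)*(t+3))*h1 + (-(3*t+1)/8)*h2 + (3*(t+3)/2)*h3
  · linear_combination (4*(3*t+1)*h1 - h3)

/-- for `J > 0`, the 3×3 linear system arising from the small-field limit of
the Ising model on a triangle has a unique solution; it is strictly positive and its second
coordinate equals `12(e^{4J}-1)/((3+e^{4J})(1+3e^{4J}))`. -/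
theorem ising_triangle_limit_system (J : ℝ) (hJ : 0 < J) :
    (∃! q : ℝ × ℝ × ℝ,
      q.1 + q.2.1 + q.2.2 = 1 ∧
      q.1 / 2 + q.2.1 / 3 + q.2.2 / 4
        = (exp (3 * J) + exp (-J)) / (2 * exp (3 * J) + 6 * exp (-J)) ∧
      q.1 + q.2.1 + 3 * q.2.2 / 4 = 3 * exp (3 * J) / (3 * exp (3 * J) + exp (-J))) ∧
    ∀ q : ℝ × ℝ × ℝ,
      (q.1 + q.2.1 + q.2.2 = 1 ∧
        q.1 / 2 + q.2.1 / 3 + q.2.2 / 4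
          = (exp (3 * J) + exp (-J)) / (2 * exp (3 * J) + 6 * exp (-J)) ∧
        q.1 + q.2.1 + 3 * q.2.2 / 4 = 3 * exp (3 * J) / (3 * exp (3 * J) + exp (-J))) →
      0 < q.1 ∧ 0 < q.2.1 ∧ 0 < q.2.2 ∧
        q.2.1 = 12 * (exp (4 * J) - 1) / ((3 + exp (4 * J)) * (1 + 3 * exp (4 * J))) := by
  set t := exp (4 * J) with htdef
  set b := exp (-J) with hbdef
  have hb : 0 < b := exp_pos _
  have ht : 1 < t := by
    rw [htdef, show (1:ℝ) = exp 0 from (exp_zero).symm]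
    exact exp_lt_exp.mpr (by linarith)
  have h34 : exp (3 * J) = t * b := by
    rw [htdef, hbdef, ← exp_add]; ring_nf
  have hA : (2 * t + 6) ≠ 0 := by nlinarith
  have hB : (3 * t + 1) ≠ 0 := by nlinarith
  have hC : (3 + t) ≠ 0 := by nlinarith
  have hD : (1 + 3 * t) ≠ 0 := by nlinarith
  have hDen : 0 < (3 + t) * (1 + 3 * t) := by nlinarith
  have e2 : (exp (3 * J) + b) / (2 * exp (3 * J) + 6 * b) = (t + 1) / (2 * t + 6) := by
    rw [h34]; rw [div_eq_div_iff (by positivity) (by positivity)]; ring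
  have e3 : 3 * exp (3 * J) / (3 * exp (3 * J) + b) = 3 * t / (3 * t + 1) := by
    rw [h34]; rw [div_eq_div_iff (by positivity) (by positivity)]; ring
  have key : ∀ q : ℝ × ℝ × ℝ,
      (q.1 + q.2.1 + q.2.2 = 1 ∧
        q.1 / 2 + q.2.1 / 3 + q.2.2 / 4
          = (exp (3 * J) + exp (-J)) / (2 * exp (3 * J) + 6 * exp (-J)) ∧
        q.1 + q.2.1 + 3 * q.2.2 / 4 = 3 * exp (3 * J) / (3 * exp (3 * J) + exp (-J))) →
      q = (3 * (t - 1)^2 / ((3 + t) * (1 + 3 * t)),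
           12 * (t - 1) / ((3 + t) * (1 + 3 * t)),
           4 * (3 + t) / ((3 + t) * (1 + 3 * t))) := by
    rintro ⟨x, y, z⟩ ⟨h1, h2, h3⟩
    rw [← hbdef, e2] at h2
    rw [← hbdef, e3] at h3
    obtain ⟨hx, hy, hz⟩ := ising_core t x y z ht h1 h2 h3
    simp_all
  refine ⟨⟨(3 * (t - 1)^2 / ((3 + t) * (1 + 3 * t)),
           12 * (t - 1) / ((3 + t) * (1 + 3 * t)),
           4 * (3 + t) / ((3 + t) * (1 + 3 * t))), ⟨?_, ?_, ?_⟩,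
           fun q hq => key q hq⟩, ?_⟩
  · dsimp only; field_simp; ring
  · dsimp only; rw [e2]; field_simp; ring
  · dsimp only; rw [e3]; field_simp; ring
  · intro q hq
    have := key q hq
    rw [this]
    exact ⟨div_pos (by nlinarith) hDen, div_pos (by nlinarith) hDen,
      div_pos (by nlinarith) hDen, rfl⟩
end

section
/- For every real J > 0, one has 12(e^{4J} − 1) / ((3 + e^{4J})(1 + 3e^{4J})) < 6e^{−2J}(e^{2J} − 1) / (3 + e^{4J}). -/
open Real

/-- for every `J > 0`,
`12(e^{4J}-1)/((3+e^{4J})(1+3e^{4J})) < 6e^{-2J}(e^{2J}-1)/(3+e^{4J})`. -/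
theorem limit_ne_rcm (J : ℝ) (hJ : 0 < J) :
    12 * (exp (4 * J) - 1) / ((3 + exp (4 * J)) * (1 + 3 * exp (4 * J)))
      < 6 * exp (-2 * J) * (exp (2 * J) - 1) / (3 + exp (4 * J)) := by
  set x := exp (2 * J) with hxdef
  have hx : 1 < x := by
    calc 1 = exp 0 := exp_zero.symm
    _ < exp (2 * J) := exp_lt_exp.mpr (by linarith)
  have hx0 : 0 < x := by linarith
  have h4 : exp (4 * J) = x ^ 2 := by
    rw [hxdef, ← Real.exp_nat_mul]
    ring_nf
  have hinv : exp (-2 * J) = x⁻¹ := by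
    rw [hxdef, ← Real.exp_neg]
    ring_nf
  rw [h4, hinv]
  have hrw : 6 * x⁻¹ * (x - 1) / (3 + x ^ 2) = 6 * (x - 1) / (x * (3 + x ^ 2)) := by
    field_simp
  rw [hrw, div_lt_div_iff₀ (by nlinarith) (by positivity)]
  have key : 0 < 6 * (x - 1) ^ 3 * (3 + x ^ 2) := by
    have h1 : 0 < (x - 1) ^ 3 := pow_pos (by linarith) 3
    positivity
  nlinarith [key]
end
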